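/- Let U be a real interval, let f, g : U → ℝ be continuous and strictly monotone, and let α > 0. If |B_f(x,y,z) − B_g(x,y,z)| ≤ 1 for all (x,y,z) ∈ U³ with |x − z| ≥ α, then for every n, every vector a ∈ Uⁿ and every weight vector w (with w_i > 0 and ∑ w_i = 1), one has |M_f(a,w) − M_g(a,w)| ≤ α. -/

import Mathlib

lemma strict_between {h : ℝ → ℝ} {U : Set ℝ}
    (hm : StrictMonoOn h U ∨ StrictAntiOn h U) {p q r : ℝ}
    (hp : p ∈ U) (hq : q ∈ U) (hr : r ∈ U)
    (hb : (r < q ∧ q < p) ∨ (p < q ∧ q < r)) :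
    |h p - h q| < |h p - h r| := by
  have : (h r < h q ∧ h q < h p) ∨ (h p < h q ∧ h q < h r) := by
    rcases hm with hm | hm <;> rcases hb with ⟨h1, h2⟩ | ⟨h1, h2⟩
    · exact Or.inl ⟨hm hr hq h1, hm hq hp h2⟩
    · exact Or.inr ⟨hm hp hq h1, hm hq hr h2⟩
    · exact Or.inr ⟨hm hq hp h2, hm hr hq h1⟩
    · exact Or.inl ⟨hm hq hr h2, hm hp hq h1⟩
  rcases this with ⟨h1, h2⟩ | ⟨h1, h2⟩
  · rw [abs_of_pos (by linarith), abs_of_pos (by linarith)]; linarith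
  · rw [abs_of_neg (by linarith), abs_of_neg (by linarith)]; linarith

/-- **Corollary (non-strict version of the main result).** If `|B_f - B_g| ≤ 1` on `Δ_α`, then the
quasi-arithmetic means satisfy `|M_f(a,w) - M_g(a,w)| ≤ α`. -/
theorem stmt_1 (U : Set ℝ) (hU : U.OrdConnected)
    (f g : ℝ → ℝ)
    (hfc : ContinuousOn f U) (hfm : StrictMonoOn f U ∨ StrictAntiOn f U)
    (hgc : ContinuousOn g U) (hgm : StrictMonoOn g U ∨ StrictAntiOn g U)
    (α : ℝ) (hα : 0 < α)
    (hB : ∀ x ∈ U, ∀ y ∈ U, ∀ z ∈ U, α ≤ |x - z| →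
      |(f x - f y) / (f x - f z) - (g x - g y) / (g x - g z)| ≤ 1)
    (n : ℕ) (a : Fin n → ℝ) (ha : ∀ i, a i ∈ U)
    (w : Fin n → ℝ) (hw : ∀ i, 0 < w i) (hw1 : ∑ i, w i = 1)
    (Mf Mg : ℝ) (hMf : Mf ∈ U) (hMg : Mg ∈ U)
    (hMfe : f Mf = ∑ i, w i * f (a i))
    (hMge : g Mg = ∑ i, w i * g (a i)) :
    |Mf - Mg| ≤ α := by
  by_contra hcon
  push_neg at hcon
  have hne : Mf ≠ Mg := by
    intro h
    rw [h, sub_self, abs_zero] at hcon; linarith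
  have hD : 0 < |Mf - Mg| := abs_pos.mpr (sub_ne_zero.mpr hne)
  set ε : ℝ := 1 - α / |Mf - Mg| with hεdef
  have hε0 : 0 < ε := by
    have : α / |Mf - Mg| < 1 := (div_lt_one hD).mpr hcon
    simp only [hεdef]; linarith
  have hε1 : ε < 1 := by
    have : 0 < α / |Mf - Mg| := div_pos hα hD
    simp only [hεdef]; linarith
  set z : ℝ := Mg + ε * (Mf - Mg) with hzdef
  have hz_dist : |Mf - z| = α := by
    have h1 : Mf - z = (1 - ε) * (Mf - Mg) := by simp only [hzdef]; ring
    rw [h1, abs_mul, abs_of_pos (by linarith : (0:ℝ) < 1 - ε)]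
    simp only [hεdef]
    field_simp
    ring
  have hbet : (Mg < z ∧ z < Mf) ∨ (Mf < z ∧ z < Mg) := by
    rcases lt_or_gt_of_ne hne.symm with h | h
    · left; constructor <;> nlinarith
    · right; constructor <;> nlinarith
  have hzU : z ∈ U := by
    rcases hbet with ⟨h1, h2⟩ | ⟨h1, h2⟩
    · exact hU.out hMg hMf ⟨h1.le, h2.le⟩
    · exact hU.out hMf hMg ⟨h1.le, h2.le⟩
  have hMfz : Mf ≠ z := by rcases hbet with ⟨_, h⟩ | ⟨h, _⟩ <;> [exact h.ne'; exact h.ne]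
  have hfinj : f Mf ≠ f z := by
    rcases hfm with h | h
    · exact fun he => hMfz (h.injOn hMf hzU he)
    · exact fun he => hMfz (h.injOn hMf hzU he)
  have hginj : g Mf ≠ g z := by
    rcases hgm with h | h
    · exact fun he => hMfz (h.injOn hMf hzU he)
    · exact fun he => hMfz (h.injOn hMf hzU he)
  have hglt : |g Mf - g z| < |g Mf - g Mg| := by
    apply strict_between hgm hMf hzU hMg
    rcases hbet with ⟨h1, h2⟩ | ⟨h1, h2⟩
    · exact Or.inl ⟨h1, h2⟩
    · exact Or.inr ⟨h1, h2⟩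
  have hP : f Mf - f z ≠ 0 := sub_ne_zero.mpr hfinj
  have hQ : g Mf - g z ≠ 0 := sub_ne_zero.mpr hginj
  have hQ' : 0 < |g Mf - g z| := abs_pos.mpr hQ
  set c : ℝ := (g Mf - g Mg) / (g Mf - g z) with hcdef
  have hc : 1 < |c| := by
    rw [hcdef, abs_div, lt_div_iff₀ hQ']
    linarith
  have e1 : ∑ i, w i * (f Mf - f (a i)) = 0 := by
    have : ∑ i, w i * (f Mf - f (a i))
        = (∑ i, w i) * f Mf - ∑ i, w i * f (a i) := by
      rw [Finset.sum_mul]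
      rw [← Finset.sum_sub_distrib]
      congr 1; ext i; ring
    rw [this, hw1, ← hMfe]; ring
  have e2 : ∑ i, w i * (g Mf - g (a i)) = g Mf - g Mg := by
    have : ∑ i, w i * (g Mf - g (a i))
        = (∑ i, w i) * g Mf - ∑ i, w i * g (a i) := by
      rw [Finset.sum_mul]
      rw [← Finset.sum_sub_distrib]
      congr 1; ext i; ring
    rw [this, hw1, ← hMge]; ring
  have key : ∑ i, w i * ((f Mf - f (a i)) / (f Mf - f z)
      - (g Mf - g (a i)) / (g Mf - g z)) = -c := by
    have : ∑ i, w i * ((f Mf - f (a i)) / (f Mf - f z)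
        - (g Mf - g (a i)) / (g Mf - g z))
        = (∑ i, w i * (f Mf - f (a i))) / (f Mf - f z)
        - (∑ i, w i * (g Mf - g (a i))) / (g Mf - g z) := by
      rw [Finset.sum_div, Finset.sum_div, ← Finset.sum_sub_distrib]
      congr 1; ext i; field_simp
    rw [this, e1, e2, hcdef]
    simp
  have bound : |∑ i, w i * ((f Mf - f (a i)) / (f Mf - f z)
      - (g Mf - g (a i)) / (g Mf - g z))| ≤ 1 := by
    calc |∑ i, w i * ((f Mf - f (a i)) / (f Mf - f z)
        - (g Mf - g (a i)) / (g Mf - g z))|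
        ≤ ∑ i, |w i * ((f Mf - f (a i)) / (f Mf - f z)
          - (g Mf - g (a i)) / (g Mf - g z))| :=
        Finset.abs_sum_le_sum_abs _ _
      _ ≤ ∑ i, w i * 1 := by
        apply Finset.sum_le_sum
        intro i _
        rw [abs_mul, abs_of_pos (hw i)]
        exact mul_le_mul_of_nonneg_left
          (hB Mf hMf (a i) (ha i) z hzU (le_of_eq hz_dist.symm)) (hw i).le
      _ = 1 := by simp [hw1]
  rw [key, abs_neg] at bound
  linarith
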